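/- arXiv:1810.01700 — 2 statements merged into one kernel-verified Lean document; each statement's English description precedes it below -/
import Mathlib

section
/- Let $\nu$ be a probability measure on a Banach space and $\varphi \mapsto \|\varphi\|$ a measurable norm-like functional. Suppose there exist $\alpha \in (0,1)$ and $\beta > 0$ such that $\int e^{\beta (1+\|\varphi\|^2)^{\alpha/2}}\, \nu(d\varphi) < \infty$. Then there exists a constant $K > 0$ such that for all $n \in \mathbb{N}$, $\int \|\varphi\|^n \, \nu(d\varphi) \le K^n (n!)^{1/\alpha} \int e^{\beta(1+\|\varphi\|^2)^{\alpha/2}}\,\nu(d\varphi)$. -/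
open MeasureTheory
open scoped ENNReal

/-- `x^t ≤ t^t * exp (x - t)` for nonnegative reals. -/
lemma aux_rpow_le (x t : ℝ) (hx : 0 ≤ x) (ht : 0 ≤ t) :
    x ^ t ≤ t ^ t * Real.exp (x - t) := by
  rcases eq_or_lt_of_le ht with h | ht
  · subst h
    simp [Real.rpow_zero, Real.one_le_exp hx]
  rcases eq_or_lt_of_le hx with h | hx
  · rw [← h, Real.zero_rpow ht.ne']
    positivity
  · have hlog : Real.log (x / t) ≤ x / t - 1 :=
      Real.log_le_sub_one_of_pos (by positivity)
    rw [Real.log_div hx.ne' ht.ne'] at hlog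
    have h2 : t * Real.log x ≤ t * Real.log t + (x - t) := by
      have := mul_le_mul_of_nonneg_left hlog ht.le
      rw [mul_sub, mul_sub, mul_div_cancel₀ _ ht.ne', mul_one] at this
      linarith
    calc x ^ t = Real.exp (Real.log x * t) := Real.rpow_def_of_pos hx t
      _ ≤ Real.exp (Real.log t * t + (x - t)) := by
          apply Real.exp_le_exp.2; rw [mul_comm (Real.log x)]; linarith [h2]
      _ = t ^ t * Real.exp (x - t) := by
          rw [Real.exp_add, Real.rpow_def_of_pos ht]

/-- `n^n ≤ e^n * n!`. -/
lemma aux_pow_le_exp_factorial (n : ℕ) :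
    (n : ℝ) ^ n ≤ Real.exp 1 ^ n * (n.factorial : ℝ) := by
  induction n with
  | zero => simp
  | succ n ih =>
    have hstep : ((n : ℝ) + 1) ^ n ≤ Real.exp 1 * (n : ℝ) ^ n := by
      rcases Nat.eq_zero_or_pos n with h | h
      · subst h; simpa using Real.one_le_exp zero_le_one
      · have hn : (0 : ℝ) < n := by exact_mod_cast h
        have h1 : (1 : ℝ) + 1 / n ≤ Real.exp (1 / n) := by
          have := Real.add_one_le_exp (1 / (n : ℝ)); linarith
        have h2 : ((1 : ℝ) + 1 / n) ^ n ≤ Real.exp (1 / n) ^ n :=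
          pow_le_pow_left₀ (by positivity) h1 n
        rw [← Real.exp_nat_mul, mul_one_div, div_self hn.ne'] at h2
        have h3 : ((n : ℝ) + 1) ^ n = ((1 : ℝ) + 1 / n) ^ n * (n : ℝ) ^ n := by
          rw [← mul_pow]
          congr 1
          field_simp
        rw [h3]
        exact mul_le_mul_of_nonneg_right h2 (by positivity)
    calc ((n + 1 : ℕ) : ℝ) ^ (n + 1) = ((n : ℝ) + 1) * ((n : ℝ) + 1) ^ n := by
          push_cast; ring
      _ ≤ ((n : ℝ) + 1) * (Real.exp 1 * (n : ℝ) ^ n) := by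
          apply mul_le_mul_of_nonneg_left hstep (by positivity)
      _ ≤ ((n : ℝ) + 1) * (Real.exp 1 * (Real.exp 1 ^ n * n.factorial)) := by
          apply mul_le_mul_of_nonneg_left _ (by positivity)
          exact mul_le_mul_of_nonneg_left ih (Real.exp_pos 1).le
      _ = Real.exp 1 ^ (n + 1) * ((n + 1).factorial : ℝ) := by
          push_cast [Nat.factorial_succ]; ring

/-- Stretched exponential integrability implies factorial moment bounds:
if `∫ exp(β (1+N φ²)^{α/2}) dν < ∞` for some `α ∈ (0,1)`, `β > 0`, then
`∫ N^n dν ≤ K^n (n!)^{1/α} ∫ exp(β (1+N φ²)^{α/2}) dν` for some `K > 0`. -/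
theorem stmt5 {E : Type*} [NormedAddCommGroup E] [MeasurableSpace E]
    (ν : Measure E) [IsProbabilityMeasure ν]
    (N : E → ℝ) (hNmeas : Measurable N) (hN0 : ∀ φ, 0 ≤ N φ)
    (α β : ℝ) (hα : α ∈ Set.Ioo (0:ℝ) 1) (hβ : 0 < β)
    (hint : Integrable (fun φ => Real.exp (β * (1 + N φ ^ 2) ^ (α / 2))) ν) :
    ∃ K > 0, ∀ n : ℕ,
      (∫⁻ φ, ENNReal.ofReal (N φ ^ n) ∂ν) ≤
        ENNReal.ofReal (K ^ n * (n.factorial : ℝ) ^ ((1:ℝ) / α) *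
          ∫ φ, Real.exp (β * (1 + N φ ^ 2) ^ (α / 2)) ∂ν) := by
  obtain ⟨hα0, hα1⟩ := hα
  set I : ℝ := ∫ φ, Real.exp (β * (1 + N φ ^ 2) ^ (α / 2)) ∂ν with hI
  have hexp_nn : ∀ φ, (0:ℝ) ≤ Real.exp (β * (1 + N φ ^ 2) ^ (α / 2)) :=
    fun φ => (Real.exp_pos _).le
  have hI1 : 1 ≤ I := by
    have hone : ∀ φ, (1:ℝ) ≤ Real.exp (β * (1 + N φ ^ 2) ^ (α / 2)) := by
      intro φ
      apply Real.one_le_exp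
      have h1 : (1:ℝ) ≤ 1 + N φ ^ 2 := by nlinarith [hN0 φ]
      have h2 := Real.one_le_rpow h1 (by linarith : (0:ℝ) ≤ α / 2)
      nlinarith
    calc (1:ℝ) = ∫ _, (1:ℝ) ∂ν := by simp
      _ ≤ I := integral_mono (integrable_const 1) hint (fun φ => hone φ)
  have hI0 : (0:ℝ) < I := lt_of_lt_of_le one_pos hI1
  have hαβ : (0:ℝ) < α * β := mul_pos hα0 hβ
  set K : ℝ := ((α * β)⁻¹) ^ ((1:ℝ)/α) with hK
  have hK0 : 0 < K := Real.rpow_pos_of_pos (inv_pos.2 hαβ) _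
  refine ⟨K, hK0, fun n => ?_⟩
  rcases Nat.eq_zero_or_pos n with hn | hn
  · subst hn
    simp only [pow_zero, Nat.factorial_zero, Nat.cast_one, Real.one_rpow, one_mul,
      ENNReal.ofReal_one]
    rw [lintegral_one, measure_univ]
    exact (ENNReal.one_le_ofReal).2 hI1
  -- main case n ≥ 1
  have hn' : (0:ℝ) < n := by exact_mod_cast hn
  set t : ℝ := n / α with ht
  have ht0 : 0 < t := div_pos hn' hα0
  set C : ℝ := β ^ (-t) * t ^ t * Real.exp (-t) with hC
  have hC0 : 0 < C :=
    mul_pos (mul_pos (Real.rpow_pos_of_pos hβ _) (Real.rpow_pos_of_pos ht0 _))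
      (Real.exp_pos _)
  have htα : t * α = (n:ℝ) := by rw [ht, div_mul_cancel₀ _ hα0.ne']
  -- pointwise bound
  have hpoint : ∀ φ, N φ ^ n ≤ C * Real.exp (β * (1 + N φ ^ 2) ^ (α / 2)) := by
    intro φ
    set s : ℝ := 1 + N φ ^ 2 with hs
    have hs1 : (1:ℝ) ≤ s := by nlinarith [hN0 φ]
    have hs0 : (0:ℝ) < s := lt_of_lt_of_le one_pos hs1
    set y : ℝ := s ^ (α / 2) with hy
    have hy1 : (1:ℝ) ≤ y := Real.one_le_rpow hs1 (by linarith : (0:ℝ) ≤ α / 2)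
    have hy0 : (0:ℝ) < y := lt_of_lt_of_le one_pos hy1
    have hNle : N φ ≤ Real.sqrt s := Real.le_sqrt_of_sq_le (by nlinarith)
    have h1 : N φ ^ n ≤ Real.sqrt s ^ n :=
      pow_le_pow_left₀ (hN0 φ) hNle n
    have hexpeq : (1/(2:ℝ)) * n = α / 2 * t := by
      rw [ht]; field_simp
    have h2 : Real.sqrt s ^ n = y ^ t := by
      rw [Real.sqrt_eq_rpow, ← Real.rpow_natCast (s ^ (1/(2:ℝ))) n,
        ← Real.rpow_mul hs0.le, hy, ← Real.rpow_mul hs0.le, hexpeq]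
    have h3 : y ^ t = (β * y) ^ t * β ^ (-t) := by
      rw [Real.mul_rpow hβ.le hy0.le, Real.rpow_neg hβ.le, mul_comm (β ^ t),
        mul_assoc, mul_inv_cancel₀ (Real.rpow_pos_of_pos hβ t).ne', mul_one]
    have h4 : (β * y) ^ t ≤ t ^ t * Real.exp (β * y - t) :=
      aux_rpow_le _ _ (mul_nonneg hβ.le hy0.le) ht0.le
    calc N φ ^ n ≤ y ^ t := by rw [← h2]; exact h1
      _ = (β * y) ^ t * β ^ (-t) := h3
      _ ≤ (t ^ t * Real.exp (β * y - t)) * β ^ (-t) :=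
          mul_le_mul_of_nonneg_right h4 (Real.rpow_pos_of_pos hβ _).le
      _ = C * Real.exp (β * y) := by
          rw [hC, Real.exp_sub, Real.exp_neg]
          field_simp
  -- the key constant inequality
  have hCK : C ≤ K ^ n * (n.factorial : ℝ) ^ ((1:ℝ)/α) := by
    set R : ℝ := K ^ n * (n.factorial : ℝ) ^ ((1:ℝ)/α) with hR
    have hfac : (0:ℝ) < (n.factorial : ℝ) := by exact_mod_cast n.factorial_pos
    have hR0 : 0 < R :=
      mul_pos (pow_pos hK0 n) (Real.rpow_pos_of_pos hfac _)
    have hpow : C ^ α ≤ R ^ α := by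
      have e1 : (β ^ (-t)) ^ α = β⁻¹ ^ n := by
        rw [← Real.rpow_mul hβ.le, neg_mul, htα, Real.rpow_neg hβ.le,
          Real.rpow_natCast, inv_pow]
      have e2 : (t ^ t) ^ α = t ^ n := by
        rw [← Real.rpow_mul ht0.le, htα, Real.rpow_natCast]
      have e3 : (Real.exp (-t)) ^ α = (Real.exp 1)⁻¹ ^ n := by
        rw [← Real.exp_mul, neg_mul, htα, inv_pow, ← Real.exp_nat_mul, mul_one,
          ← Real.exp_neg]
      have hCa : C ^ α = β⁻¹ ^ n * t ^ n * (Real.exp 1)⁻¹ ^ n := by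
        rw [hC, Real.mul_rpow (mul_nonneg (Real.rpow_pos_of_pos hβ _).le
            (Real.rpow_pos_of_pos ht0 _).le) (Real.exp_pos _).le,
          Real.mul_rpow (Real.rpow_pos_of_pos hβ _).le (Real.rpow_pos_of_pos ht0 _).le,
          e1, e2, e3]
      have hRa : R ^ α = ((α * β)⁻¹) ^ n * (n.factorial : ℝ) := by
        have hKa : (K ^ n : ℝ) ^ α = ((α * β)⁻¹) ^ n := by
          rw [← Real.rpow_natCast K n, ← Real.rpow_mul hK0.le, hK,
            ← Real.rpow_mul (inv_pos.2 hαβ).le]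
          have : (1:ℝ)/α * ((n:ℝ) * α) = (n:ℝ) := by
            rw [one_div, mul_comm (n:ℝ) α, ← mul_assoc, inv_mul_cancel₀ hα0.ne', one_mul]
          rw [this, Real.rpow_natCast]
        have hfa : ((n.factorial : ℝ) ^ ((1:ℝ)/α)) ^ α = (n.factorial : ℝ) := by
          rw [← Real.rpow_mul hfac.le, one_div, inv_mul_cancel₀ hα0.ne', Real.rpow_one]
        rw [hR, Real.mul_rpow (pow_pos hK0 n).le (Real.rpow_pos_of_pos hfac _).le,
          hKa, hfa]
      rw [hCa, hRa]
      have hbase : β⁻¹ * t * (Real.exp 1)⁻¹ = (α * β)⁻¹ * (Real.exp 1)⁻¹ * (n:ℝ) := by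
        rw [ht, mul_inv]
        field_simp
      have hb : β⁻¹ ^ n * t ^ n * (Real.exp 1)⁻¹ ^ n
          = ((α * β)⁻¹ * (Real.exp 1)⁻¹) ^ n * (n:ℝ) ^ n := by
        rw [← mul_pow, ← mul_pow, hbase, mul_pow]
      have h6 := aux_pow_le_exp_factorial n
      have he : ((Real.exp 1)⁻¹) ^ n * Real.exp 1 ^ n = 1 := by
        rw [← mul_pow, inv_mul_cancel₀ (Real.exp_ne_zero 1), one_pow]
      calc β⁻¹ ^ n * t ^ n * (Real.exp 1)⁻¹ ^ n
          = ((α * β)⁻¹ * (Real.exp 1)⁻¹) ^ n * (n:ℝ) ^ n := hb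
        _ ≤ ((α * β)⁻¹ * (Real.exp 1)⁻¹) ^ n * (Real.exp 1 ^ n * n.factorial) := by
            apply mul_le_mul_of_nonneg_left h6
            positivity
        _ = ((α * β)⁻¹) ^ n * (((Real.exp 1)⁻¹) ^ n * Real.exp 1 ^ n * (n.factorial:ℝ)) := by
            rw [mul_pow]; ring
        _ = ((α * β)⁻¹) ^ n * (n.factorial : ℝ) := by rw [he, one_mul]
    have h8 := Real.rpow_le_rpow (Real.rpow_pos_of_pos hC0 α).le hpow
      (le_of_lt (one_div_pos.2 hα0))
    rwa [← Real.rpow_mul hC0.le, ← Real.rpow_mul hR0.le,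
      mul_one_div, div_self hα0.ne', Real.rpow_one, Real.rpow_one] at h8
  -- assemble
  calc (∫⁻ φ, ENNReal.ofReal (N φ ^ n) ∂ν)
      ≤ ∫⁻ φ, ENNReal.ofReal (C * Real.exp (β * (1 + N φ ^ 2) ^ (α / 2))) ∂ν :=
        lintegral_mono fun φ => ENNReal.ofReal_le_ofReal (hpoint φ)
    _ = ENNReal.ofReal C * ∫⁻ φ, ENNReal.ofReal (Real.exp (β * (1 + N φ ^ 2) ^ (α / 2))) ∂ν := by
        simp_rw [ENNReal.ofReal_mul hC0.le]
        exact lintegral_const_mul' _ _ ENNReal.ofReal_ne_top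
    _ = ENNReal.ofReal C * ENNReal.ofReal I := by
        rw [← ofReal_integral_eq_lintegral_ofReal hint (ae_of_all _ hexp_nn)]
    _ = ENNReal.ofReal (C * I) := (ENNReal.ofReal_mul hC0.le).symm
    _ ≤ ENNReal.ofReal (K ^ n * (n.factorial : ℝ) ^ ((1:ℝ)/α) * I) :=
        ENNReal.ofReal_le_ofReal (mul_le_mul_of_nonneg_right hCK hI0.le)
end

section
/- Let $\mu$ be a probability measure on a topological vector space $V$ of distributions, and suppose there exist $\beta > 0$ and a measurable functional $\|\cdot\|$ with $\int e^{\beta\|\varphi\|^{\alpha}}\mu(d\varphi) < \infty$ for some $\alpha \in (0,1)$, and that for continuous linear functionals $f$ one has $|\varphi(f)| \le \|\varphi\| \cdot \|f\|_s$ for a fixed norm $\|\cdot\|_s$. Then the moment functionals $S_n(f_1\otimes\cdots\otimes f_n) := \int \varphi(f_1)\cdots\varphi(f_n)\,\mu(d\varphi)$ are well-defined and satisfy $|S_n(f_1\otimes\cdots\otimes f_n)| \le K^n (n!)^{1/\alpha}\prod_{i=1}^n \|f_i\|_s$ for some constant $K$. -/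
open MeasureTheory

/-- `y^r ≤ (r/e)^r e^y` for `y ≥ 0`, `r > 0`. -/
lemma aux_rpow_le_s17 (y r : ℝ) (hy : 0 ≤ y) (hr : 0 < r) :
    y ^ r ≤ (r / Real.exp 1) ^ r * Real.exp y := by
  rcases eq_or_lt_of_le hy with h0 | hy'
  · rw [← h0, Real.zero_rpow hr.ne']
    positivity
  · have hre : 0 < r / Real.exp 1 := div_pos hr (Real.exp_pos 1)
    rw [Real.rpow_def_of_pos hy', Real.rpow_def_of_pos hre, ← Real.exp_add, Real.exp_le_exp]
    have hlog : Real.log (y / r) ≤ y / r - 1 := Real.log_le_sub_one_of_pos (div_pos hy' hr)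
    rw [Real.log_div hy'.ne' hr.ne'] at hlog
    rw [Real.log_div hr.ne' (Real.exp_pos 1).ne', Real.log_exp]
    nlinarith [mul_le_mul_of_nonneg_left hlog hr.le, mul_div_cancel₀ y hr.ne']

/-- `x^n ≤ C^n (n!)^{1/α} e^{β x^α}` for `x ≥ 0`. -/
lemma aux_pow_le (α β : ℝ) (hα : α ∈ Set.Ioo (0:ℝ) 1) (hβ : 0 < β) (x : ℝ) (hx : 0 ≤ x)
    (n : ℕ) :
    x ^ n ≤ (((α * β)⁻¹) ^ ((1:ℝ)/α) * Real.exp 1 ^ ((1:ℝ)/α)) ^ n *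
      (n.factorial : ℝ) ^ ((1:ℝ)/α) * Real.exp (β * x ^ α) := by
  obtain ⟨hα0, hα1⟩ := hα
  rcases Nat.eq_zero_or_pos n with rfl | hn
  · simp [Real.one_rpow]
    positivity
  · have hnR : (0:ℝ) < n := Nat.cast_pos.mpr hn
    set r : ℝ := (n:ℝ)/α with hr
    set c1 : ℝ := (1:ℝ)/α with hc1
    have hrpos : 0 < r := by positivity
    have hxα : 0 ≤ x ^ α := Real.rpow_nonneg hx α
    have key := aux_rpow_le_s17 (β * x ^ α) r (by positivity) hrpos
    have hL : (β * x ^ α) ^ r = β ^ r * x ^ n := by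
      rw [Real.mul_rpow hβ.le hxα, ← Real.rpow_natCast x n, ← Real.rpow_mul hx,
        show α * r = (n:ℝ) by rw [hr]; field_simp]
    rw [hL] at key
    have hβr : 0 < β ^ r := Real.rpow_pos_of_pos hβ _
    have key2 : x ^ n ≤ (β ^ r)⁻¹ * ((r / Real.exp 1) ^ r * Real.exp (β * x ^ α)) := by
      rw [inv_mul_eq_div, le_div_iff₀' hβr]
      exact key
    have hfac : (n:ℝ) ^ (n:ℕ) ≤ Real.exp n * n.factorial := by
      have h := Real.pow_div_factorial_le_exp (x := (n:ℝ)) hnR.le n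
      have hf : (0:ℝ) < n.factorial := by positivity
      rw [div_le_iff₀ hf] at h
      linarith
    have hc1pos : 0 < c1 := by positivity
    have stepB : (n:ℝ) ^ r ≤ Real.exp 1 ^ r * (n.factorial : ℝ) ^ c1 := by
      have h := Real.rpow_le_rpow (by positivity) hfac hc1pos.le
      rw [← Real.rpow_natCast (n:ℝ) n, ← Real.rpow_mul hnR.le] at h
      rw [Real.mul_rpow (Real.exp_nonneg _) (by positivity)] at h
      have e1 : (n:ℝ) * c1 = r := by rw [hc1, hr]; ring
      have e2 : Real.exp (n:ℝ) = Real.exp 1 ^ ((n:ℝ)) := by rw [Real.exp_one_rpow]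
      rw [e1, e2, ← Real.rpow_mul (Real.exp_nonneg 1), e1] at h
      exact h
    have hsplit : (r / Real.exp 1) ^ r = (n:ℝ) ^ r * ((α * Real.exp 1)⁻¹) ^ r := by
      rw [← Real.mul_rpow hnR.le (by positivity)]
      congr 1
      field_simp [hr]
      rw [hr]; field_simp
    have hprod : β⁻¹ ^ r * Real.exp 1 ^ r * ((α * Real.exp 1)⁻¹) ^ r = ((α * β)⁻¹) ^ r := by
      rw [← Real.mul_rpow (by positivity) (Real.exp_nonneg 1),
        ← Real.mul_rpow (by positivity) (by positivity)]
      congr 1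
      field_simp
    have h1e : (1:ℝ) ≤ Real.exp 1 ^ r := Real.one_le_rpow (Real.one_le_exp one_pos.le) hrpos.le
    have hXnn : (0:ℝ) ≤ ((α * Real.exp 1)⁻¹) ^ r := Real.rpow_nonneg (by positivity) _
    have hcomb : (β ^ r)⁻¹ * ((r / Real.exp 1) ^ r) ≤
        ((α * β)⁻¹) ^ r * Real.exp 1 ^ r * (n.factorial : ℝ) ^ c1 := by
      rw [hsplit, ← Real.inv_rpow hβ.le]
      have hfc : (0:ℝ) ≤ (n.factorial : ℝ) ^ c1 := Real.rpow_nonneg (by positivity) _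
      calc β⁻¹ ^ r * ((n:ℝ) ^ r * ((α * Real.exp 1)⁻¹) ^ r)
          ≤ β⁻¹ ^ r * ((Real.exp 1 ^ r * (n.factorial : ℝ) ^ c1) * ((α * Real.exp 1)⁻¹) ^ r) := by
            apply mul_le_mul_of_nonneg_left _ (Real.rpow_nonneg (by positivity) _)
            exact mul_le_mul_of_nonneg_right stepB hXnn
        _ = β⁻¹ ^ r * Real.exp 1 ^ r * ((α * Real.exp 1)⁻¹) ^ r * (n.factorial : ℝ) ^ c1 := by
            ring
        _ = ((α * β)⁻¹) ^ r * (n.factorial : ℝ) ^ c1 := by rw [hprod]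
        _ ≤ ((α * β)⁻¹) ^ r * Real.exp 1 ^ r * (n.factorial : ℝ) ^ c1 := by
            have hab : (0:ℝ) ≤ ((α * β)⁻¹) ^ r := Real.rpow_nonneg (by positivity) _
            nlinarith [mul_nonneg (mul_nonneg hab hfc) (sub_nonneg.mpr h1e)]
    have hpack : (((α * β)⁻¹) ^ c1 * Real.exp 1 ^ c1) ^ n =
        ((α * β)⁻¹) ^ r * Real.exp 1 ^ r := by
      rw [mul_pow, ← Real.rpow_natCast (((α * β)⁻¹) ^ c1) n,
        ← Real.rpow_natCast ((Real.exp 1) ^ c1) n,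
        ← Real.rpow_mul (by positivity), ← Real.rpow_mul (Real.exp_nonneg 1),
        show c1 * (n:ℝ) = r by rw [hc1, hr]; ring]
    calc x ^ n ≤ (β ^ r)⁻¹ * ((r / Real.exp 1) ^ r) * Real.exp (β * x ^ α) := by
          rw [mul_assoc]; exact key2
      _ ≤ ((α * β)⁻¹) ^ r * Real.exp 1 ^ r * (n.factorial : ℝ) ^ c1 * Real.exp (β * x ^ α) :=
          mul_le_mul_of_nonneg_right hcomb (Real.exp_nonneg _)
      _ = _ := by rw [hpack]
/-- OS0 from stretched exponential integrability: if `|φ(f)| ≤ N(φ)‖f‖ₛ` and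
`∫ e^{β N^α} dμ < ∞` for some `α ∈ (0,1)`, `β > 0`, then the moment functionals
`Sₙ(f₁⊗⋯⊗fₙ) = ∫ φ(f₁)⋯φ(fₙ) dμ` are well-defined and satisfy
`|Sₙ| ≤ Kⁿ (n!)^{1/α} ∏ ‖fᵢ‖ₛ`. -/
theorem stmt17 {V : Type*} [MeasurableSpace V] {E : Type*} [NormedAddCommGroup E]
    (μ : Measure V) [IsProbabilityMeasure μ]
    (B : V → E → ℝ) (hB : ∀ f, Measurable fun φ => B φ f)
    (N : V → ℝ) (hNmeas : Measurable N) (hN0 : ∀ φ, 0 ≤ N φ)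
    (α β : ℝ) (hα : α ∈ Set.Ioo (0:ℝ) 1) (hβ : 0 < β)
    (hexp : Integrable (fun φ => Real.exp (β * N φ ^ α)) μ)
    (hpair : ∀ φ f, |B φ f| ≤ N φ * ‖f‖) :
    ∃ K > 0, ∀ (n : ℕ) (f : Fin n → E),
      Integrable (fun φ => ∏ i, B φ (f i)) μ ∧
      |∫ φ, ∏ i, B φ (f i) ∂μ| ≤
        K ^ n * (n.factorial : ℝ) ^ ((1:ℝ) / α) * ∏ i, ‖f i‖ := by
  obtain ⟨hα0, hα1⟩ := hα
  set C : ℝ := ((α * β)⁻¹) ^ ((1:ℝ)/α) * Real.exp 1 ^ ((1:ℝ)/α) with hC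
  have hCpos : 0 < C := by
    have h1 : (0:ℝ) < ((α * β)⁻¹) ^ ((1:ℝ)/α) := Real.rpow_pos_of_pos (by positivity) _
    have h2 : (0:ℝ) < Real.exp 1 ^ ((1:ℝ)/α) := Real.rpow_pos_of_pos (Real.exp_pos 1) _
    positivity
  set I : ℝ := ∫ φ, Real.exp (β * N φ ^ α) ∂μ with hI
  have hI1 : 1 ≤ I := by
    have h1 : ∀ φ, (1:ℝ) ≤ Real.exp (β * N φ ^ α) := fun φ =>
      Real.one_le_exp (mul_nonneg hβ.le (Real.rpow_nonneg (hN0 φ) α))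
    calc (1:ℝ) = ∫ _, (1:ℝ) ∂μ := by simp
      _ ≤ I := integral_mono (integrable_const 1) hexp h1
  refine ⟨max 1 C * I, by positivity, fun n f => ?_⟩
  have hmeas : Measurable fun φ => ∏ i, B φ (f i) :=
    Finset.measurable_prod _ fun i _ => hB (f i)
  have hpnn : (0:ℝ) ≤ ∏ i, ‖f i‖ := Finset.prod_nonneg fun i _ => norm_nonneg _
  have hfacnn : (0:ℝ) ≤ (n.factorial : ℝ) ^ ((1:ℝ)/α) := Real.rpow_nonneg (by positivity) _
  have hbd : ∀ φ, |∏ i, B φ (f i)| ≤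
      (C ^ n * (n.factorial : ℝ) ^ ((1:ℝ)/α) * ∏ i, ‖f i‖) * Real.exp (β * N φ ^ α) := by
    intro φ
    calc |∏ i, B φ (f i)| = ∏ i, |B φ (f i)| := Finset.abs_prod _ _
      _ ≤ ∏ i, (N φ * ‖f i‖) :=
          Finset.prod_le_prod (fun i _ => abs_nonneg _) (fun i _ => hpair φ (f i))
      _ = N φ ^ n * ∏ i, ‖f i‖ := by
          rw [Finset.prod_mul_distrib, Finset.prod_const, Finset.card_univ, Fintype.card_fin]
      _ ≤ (C ^ n * (n.factorial : ℝ) ^ ((1:ℝ)/α) * Real.exp (β * N φ ^ α)) * ∏ i, ‖f i‖ :=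
          mul_le_mul_of_nonneg_right
            (aux_pow_le α β ⟨hα0, hα1⟩ hβ _ (hN0 φ) n) hpnn
      _ = _ := by ring
  have hint : Integrable (fun φ => ∏ i, B φ (f i)) μ := by
    refine Integrable.mono' (hexp.const_mul (C ^ n * (n.factorial : ℝ) ^ ((1:ℝ)/α) * ∏ i, ‖f i‖))
      hmeas.aestronglyMeasurable ?_
    filter_upwards with φ
    rw [Real.norm_eq_abs]
    exact hbd φ
  refine ⟨hint, ?_⟩
  rcases Nat.eq_zero_or_pos n with rfl | hn
  · simp [Real.one_rpow]
  · have habs : |∫ φ, ∏ i, B φ (f i) ∂μ| ≤ ∫ φ, |∏ i, B φ (f i)| ∂μ := by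
      simpa only [Real.norm_eq_abs] using
        norm_integral_le_integral_norm (μ := μ) (fun φ => ∏ i, B φ (f i))
    have hmono : ∫ φ, |∏ i, B φ (f i)| ∂μ ≤
        ∫ φ, (C ^ n * (n.factorial : ℝ) ^ ((1:ℝ)/α) * ∏ i, ‖f i‖) * Real.exp (β * N φ ^ α) ∂μ :=
      integral_mono hint.abs
        (hexp.const_mul _) hbd
    rw [integral_const_mul] at hmono
    have hKn : C ^ n * I ≤ (max 1 C * I) ^ n := by
      calc C ^ n * I ≤ (max 1 C) ^ n * I ^ n := by
            refine mul_le_mul (pow_le_pow_left₀ hCpos.le (le_max_right 1 C) n)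
              (le_self_pow₀ hI1 hn.ne') (by linarith) (by positivity)
        _ = (max 1 C * I) ^ n := (mul_pow _ _ _).symm
    calc |∫ φ, ∏ i, B φ (f i) ∂μ| ≤
          C ^ n * (n.factorial : ℝ) ^ ((1:ℝ)/α) * (∏ i, ‖f i‖) * I := by
          refine habs.trans (hmono.trans (le_of_eq ?_)); ring
      _ ≤ (max 1 C * I) ^ n * (n.factorial : ℝ) ^ ((1:ℝ)/α) * ∏ i, ‖f i‖ := by
          have := mul_le_mul_of_nonneg_right hKn (mul_nonneg hfacnn hpnn)
          calc C ^ n * (n.factorial : ℝ) ^ ((1:ℝ)/α) * (∏ i, ‖f i‖) * I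
              = (C ^ n * I) * ((n.factorial : ℝ) ^ ((1:ℝ)/α) * ∏ i, ‖f i‖) := by ring
            _ ≤ (max 1 C * I) ^ n * ((n.factorial : ℝ) ^ ((1:ℝ)/α) * ∏ i, ‖f i‖) := this
            _ = _ := by ring
end
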